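/- Let q be a prime, G a group, and g an element of G with orderOf g = q. Let t and n be natural numbers and a : Fin n → Fin (t+1) → ZMod q the local polynomial coefficients of the n participants, with public commitments X_{i,k} = g^{(a_{i,k}).val}. Then for every natural number j, the public key share of participant j is computable from the public commitments alone: g^{(∑_{i} ∑_{k} a_{i,k} · (j : ZMod q)^k).val} = ∏_{i=1}^{n} ∏_{k=0}^{t} (X_{i,k})^{j^k}. In particular (taking j = 0), the global public key satisfies g^{x.val} = ∏_{i=1}^{n} X_{i,0}, where x = ∑_i a_{i,0} is the global secret. -/
import Mathlib


/-- Ped-DKG correctness (C2): any participant's public key share is computable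
from the public commitments `X i k = g ^ (a i k).val` alone. -/
theorem pedDKG_public_key_share (q t n : ℕ) [Fact q.Prime]
    {G : Type*} [CommGroup G] (g : G) (hg : orderOf g = q)
    (a : Fin n → Fin (t + 1) → ZMod q) (X : Fin n → Fin (t + 1) → G)
    (hX : ∀ i k, X i k = g ^ (a i k).val) (j : ℕ) :
    g ^ (∑ i, ∑ k, a i k * (j : ZMod q) ^ (k : ℕ)).val =
      ∏ i, ∏ k : Fin (t + 1), (X i k) ^ (j ^ (k : ℕ)) := by
  have key : ∀ (s : ZMod q) (m : ℕ), (m : ZMod q) = s → g ^ s.val = g ^ m := by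
    intro s m hm
    have hq : q ≠ 0 := (Fact.out : q.Prime).ne_zero
    haveI : NeZero q := ⟨hq⟩
    rw [pow_eq_pow_iff_modEq, hg, Nat.ModEq]
    rw [← hm, ZMod.val_natCast]
    simp [Nat.mod_mod_of_dvd]
  rw [key _ (∑ i, ∑ k, (a i k).val * j ^ (k : ℕ))]
  · simp_rw [hX, ← pow_mul, Finset.prod_pow_eq_pow_sum]
  · push_cast
    simp [ZMod.natCast_val, ZMod.cast_id]
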